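/- arXiv:1903.07039 — 2 statements merged into one kernel-verified Lean document; each statement's English description precedes it below -/
import Mathlib

section
/- Let n ≥ 3 and a ∈ EuclideanSpace ℝ n, and let f(ξ) = ⟨a, ξ⟩/‖ξ‖ for ξ ≠ 0. Then ∫_{B \ {0}} ( ‖∇f(ξ)‖² + f(ξ) Δf(ξ) ) dξ = 0, where B is the open unit ball with Lebesgue measure. (This is Green's identity (3.42) from the proof of Lemma 3.7 of the paper: the boundary term vanishes because the radial derivative of f is zero on the unit sphere.) -/
open MeasureTheory

/-- The Laplacian of a real-valued function on `EuclideanSpace ℝ (Fin n)`,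
defined as the trace of the second derivative (sum of the second derivative
evaluated on the standard orthonormal basis). -/
noncomputable def laplacian {n : ℕ} (u : EuclideanSpace ℝ (Fin n) → ℝ)
    (x : EuclideanSpace ℝ (Fin n)) : ℝ :=
  ∑ i : Fin n,
    fderiv ℝ (fderiv ℝ u) x (EuclideanSpace.single i 1) (EuclideanSpace.single i 1)

noncomputable section GreenAux

variable {n : ℕ}

local notation "E" => EuclideanSpace ℝ (Fin n)

lemma green_hasFDerivAt_norm {x : EuclideanSpace ℝ (Fin n)} (hx : x ≠ 0) :
    HasFDerivAt (fun y : EuclideanSpace ℝ (Fin n) => ‖y‖) (innerSL ℝ (‖x‖⁻¹ • x)) x := by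
  have hr : ‖x‖ ≠ 0 := norm_ne_zero_iff.mpr hx
  have h2 : HasFDerivAt (fun y : E => ‖y‖ ^ 2) (2 • innerSL ℝ x) x :=
    (hasStrictFDerivAt_norm_sq x).hasFDerivAt
  have hne : ‖x‖ ^ 2 ≠ 0 := pow_ne_zero _ hr
  have h := (Real.hasDerivAt_sqrt hne).comp_hasFDerivAt x h2
  simp only [Function.comp_def] at h
  have heq : (fun y : E => Real.sqrt (‖y‖ ^ 2)) = fun y : E => ‖y‖ := by
    funext y; rw [Real.sqrt_sq (norm_nonneg y)]
  rw [heq] at h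
  refine h.congr_fderiv ?_
  ext v
  rw [Real.sqrt_sq (norm_nonneg x)]
  simp [real_inner_smul_left]
  field_simp

lemma green_hasFDerivAt_inv_norm {x : EuclideanSpace ℝ (Fin n)} (hx : x ≠ 0) :
    HasFDerivAt (fun y : EuclideanSpace ℝ (Fin n) => ‖y‖⁻¹)
      (innerSL ℝ ((-(‖x‖ ^ 3)⁻¹) • x)) x := by
  have hr : ‖x‖ ≠ 0 := norm_ne_zero_iff.mpr hx
  have h := (hasDerivAt_inv hr).comp_hasFDerivAt x (green_hasFDerivAt_norm hx)
  simp only [Function.comp_def] at h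
  refine h.congr_fderiv ?_
  ext v
  simp only [innerSL_apply_apply, real_inner_smul_left, ContinuousLinearMap.smul_apply,
    innerSL_apply_apply, smul_eq_mul]
  field_simp

lemma green_hasFDerivAt_inv_norm_cube {x : EuclideanSpace ℝ (Fin n)} (hx : x ≠ 0) :
    HasFDerivAt (fun y : EuclideanSpace ℝ (Fin n) => (‖y‖ ^ 3)⁻¹)
      (innerSL ℝ ((-3 * (‖x‖ ^ 5)⁻¹) • x)) x := by
  have hr : ‖x‖ ≠ 0 := norm_ne_zero_iff.mpr hx
  have hp : HasDerivAt (fun t : ℝ => (t ^ 3)⁻¹) (-(3 * ‖x‖ ^ 2) / (‖x‖ ^ 3) ^ 2) ‖x‖ := by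
    simpa [Pi.inv_def] using (hasDerivAt_pow 3 ‖x‖).inv (pow_ne_zero 3 hr)
  have h := hp.comp_hasFDerivAt x (green_hasFDerivAt_norm hx)
  simp only [Function.comp_def] at h
  refine h.congr_fderiv ?_
  ext v
  simp only [innerSL_apply_apply, real_inner_smul_left, ContinuousLinearMap.smul_apply,
    innerSL_apply_apply, smul_eq_mul]
  field_simp


lemma green_hasFDerivAt_f (a : EuclideanSpace ℝ (Fin n)) {x : EuclideanSpace ℝ (Fin n)}
    (hx : x ≠ 0) :
    HasFDerivAt (fun y : EuclideanSpace ℝ (Fin n) => (inner ℝ a y : ℝ) / ‖y‖)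
      (innerSL ℝ (‖x‖⁻¹ • a - ((inner ℝ a x : ℝ) / ‖x‖ ^ 3) • x)) x := by
  have hr : ‖x‖ ≠ 0 := norm_ne_zero_iff.mpr hx
  have h1 : HasFDerivAt (fun y : E => (inner ℝ a y : ℝ)) (innerSL ℝ a) x :=
    (innerSL ℝ a).hasFDerivAt
  have h := h1.mul (green_hasFDerivAt_inv_norm hx)
  have heq : (fun y : E => (inner ℝ a y : ℝ) * ‖y‖⁻¹) = fun y : E => (inner ℝ a y : ℝ) / ‖y‖ := by
    funext y; rw [div_eq_mul_inv]
  rw [show ((fun y : E => (inner ℝ a y : ℝ)) * fun y : E => ‖y‖⁻¹) = fun y : E => (inner ℝ a y : ℝ) / ‖y‖ from heq] at h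
  refine h.congr_fderiv ?_
  ext v
  simp only [innerSL_apply_apply, ContinuousLinearMap.add_apply, ContinuousLinearMap.smul_apply,
    innerSL_apply_apply, smul_eq_mul, inner_sub_left, real_inner_smul_left]
  field_simp
  ring

lemma green_gradient_f (a : EuclideanSpace ℝ (Fin n)) {x : EuclideanSpace ℝ (Fin n)}
    (hx : x ≠ 0) :
    gradient (fun y : EuclideanSpace ℝ (Fin n) => (inner ℝ a y : ℝ) / ‖y‖) x
      = ‖x‖⁻¹ • a - ((inner ℝ a x : ℝ) / ‖x‖ ^ 3) • x := by
  refine HasGradientAt.gradient ?_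
  rw [hasGradientAt_iff_hasFDerivAt]
  have := green_hasFDerivAt_f a hx
  exact this

lemma green_norm_grad_sq (a : EuclideanSpace ℝ (Fin n)) {x : EuclideanSpace ℝ (Fin n)}
    (hx : x ≠ 0) :
    ‖(‖x‖⁻¹ • a - ((inner ℝ a x : ℝ) / ‖x‖ ^ 3) • x : EuclideanSpace ℝ (Fin n))‖ ^ 2
      = ‖a‖ ^ 2 / ‖x‖ ^ 2 - (inner ℝ a x : ℝ) ^ 2 / ‖x‖ ^ 4 := by
  have hr : ‖x‖ ≠ 0 := norm_ne_zero_iff.mpr hx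
  rw [← real_inner_self_eq_norm_sq]
  simp only [inner_sub_left, inner_sub_right]
  simp only [real_inner_smul_left, real_inner_smul_right]
  simp only [real_inner_self_eq_norm_sq]
  rw [real_inner_comm x a]
  field_simp
  ring

lemma green_laplacian_f (a : EuclideanSpace ℝ (Fin n)) {x : EuclideanSpace ℝ (Fin n)}
    (hx : x ≠ 0) :
    laplacian (fun y : EuclideanSpace ℝ (Fin n) => (inner ℝ a y : ℝ) / ‖y‖) x
      = (1 - (n : ℝ)) * (inner ℝ a x : ℝ) / ‖x‖ ^ 3 := by
  have hr : ‖x‖ ≠ 0 := norm_ne_zero_iff.mpr hx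
  have h1 : HasFDerivAt (fun y : E => ‖y‖⁻¹ • a)
      (‖x‖⁻¹ • (0 : E →L[ℝ] E) + (innerSL ℝ ((-(‖x‖ ^ 3)⁻¹) • x)).smulRight a) x :=
    (green_hasFDerivAt_inv_norm hx).smul (hasFDerivAt_const a x)
  have hia : HasFDerivAt (fun y : E => (inner ℝ a y : ℝ)) (innerSL ℝ a) x :=
    (innerSL ℝ a).hasFDerivAt
  have hc : HasFDerivAt (fun y : E => (inner ℝ a y : ℝ) * (‖y‖ ^ 3)⁻¹)
      ((inner ℝ a x : ℝ) • innerSL ℝ ((-3 * (‖x‖ ^ 5)⁻¹) • x) + (‖x‖ ^ 3)⁻¹ • innerSL ℝ a) x :=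
    hia.mul (green_hasFDerivAt_inv_norm_cube hx)
  have h2 : HasFDerivAt (fun y : E => ((inner ℝ a y : ℝ) * (‖y‖ ^ 3)⁻¹) • y)
      (((inner ℝ a x : ℝ) * (‖x‖ ^ 3)⁻¹) • ContinuousLinearMap.id ℝ _ +
        ((inner ℝ a x : ℝ) • innerSL ℝ ((-3 * (‖x‖ ^ 5)⁻¹) • x) +
          (‖x‖ ^ 3)⁻¹ • innerSL ℝ a).smulRight x) x :=
    hc.smul (hasFDerivAt_id x)
  set G' : E →L[ℝ] E :=
    (‖x‖⁻¹ • (0 : E →L[ℝ] E) + (innerSL ℝ ((-(‖x‖ ^ 3)⁻¹) • x)).smulRight a) -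
    (((inner ℝ a x : ℝ) * (‖x‖ ^ 3)⁻¹) • ContinuousLinearMap.id ℝ _ +
      ((inner ℝ a x : ℝ) • innerSL ℝ ((-3 * (‖x‖ ^ 5)⁻¹) • x) +
        (‖x‖ ^ 3)⁻¹ • innerSL ℝ a).smulRight x) with hG'def
  have hg : HasFDerivAt
      (fun y : E => (‖y‖⁻¹ • a - ((inner ℝ a y : ℝ) / ‖y‖ ^ 3) • y : E)) G' x := by
    have := h1.sub h2
    simp only [div_eq_mul_inv]; exact this
  have hG : HasFDerivAt
      (fun y : E => (innerSL ℝ (‖y‖⁻¹ • a - ((inner ℝ a y : ℝ) / ‖y‖ ^ 3) • y) : E →L[ℝ] ℝ))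
      (((innerSL ℝ : EuclideanSpace ℝ (Fin n) →L[ℝ] EuclideanSpace ℝ (Fin n) →L[ℝ] ℝ)).comp G') x := by
    exact (((innerSL ℝ : EuclideanSpace ℝ (Fin n) →L[ℝ] EuclideanSpace ℝ (Fin n) →L[ℝ] ℝ)).hasFDerivAt).comp x hg
  have hev : (fderiv ℝ (fun y : E => (inner ℝ a y : ℝ) / ‖y‖))
      =ᶠ[nhds x] (fun y : E => (innerSL ℝ (‖y‖⁻¹ • a - ((inner ℝ a y : ℝ) / ‖y‖ ^ 3) • y) : E →L[ℝ] ℝ)) := by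
    filter_upwards [IsOpen.mem_nhds isOpen_compl_singleton hx] with y hy
    exact (green_hasFDerivAt_f a hy).fderiv
  have h2deriv : fderiv ℝ (fderiv ℝ (fun y : E => (inner ℝ a y : ℝ) / ‖y‖)) x
      = ((innerSL ℝ : EuclideanSpace ℝ (Fin n) →L[ℝ] EuclideanSpace ℝ (Fin n) →L[ℝ] ℝ)).comp G' := by
    rw [hev.fderiv_eq, hG.fderiv]
  rw [laplacian, h2deriv]
  simp only [hG'def, ContinuousLinearMap.coe_comp', Function.comp_apply,
    ContinuousLinearMap.sub_apply, ContinuousLinearMap.add_apply,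
    ContinuousLinearMap.smul_apply, ContinuousLinearMap.zero_apply,
    ContinuousLinearMap.smulRight_apply, ContinuousLinearMap.id_apply, innerSL_apply_apply,
    EuclideanSpace.inner_single_right, smul_eq_mul, map_one, conj_trivial,
    inner_sub_left, inner_smul_left, inner_add_left, smul_zero, zero_add,
    PiLp.smul_apply, EuclideanSpace.single_apply, if_true, one_mul, mul_one]
  have hax : (inner ℝ a x : ℝ) = ∑ i, a i * x i := by
    simp [PiLp.inner_apply, mul_comm]
  have hxx : (∑ i, x i * x i) = ‖x‖ ^ 2 := by
    have h := real_inner_self_eq_norm_sq x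
    rw [PiLp.inner_apply] at h
    simpa [pow_two] using h
  have expand : ∀ i : Fin n,
      (-(‖x‖ ^ 3)⁻¹ * x i * a i -
        (inner ℝ a x * (‖x‖ ^ 3)⁻¹ + (inner ℝ a x * (-3 * (‖x‖ ^ 5)⁻¹ * x i) + (‖x‖ ^ 3)⁻¹ * a i) * x i))
      = (-2 * (‖x‖ ^ 3)⁻¹) * (a i * x i)
        + ((3 * (inner ℝ a x : ℝ) * (‖x‖ ^ 5)⁻¹) * (x i * x i)
          + (-(inner ℝ a x : ℝ) * (‖x‖ ^ 3)⁻¹)) := fun i => by ring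
  simp only [expand]
  rw [Finset.sum_add_distrib, Finset.sum_add_distrib, ← Finset.mul_sum, ← Finset.mul_sum,
    Finset.sum_const, Finset.card_univ, Fintype.card_fin, ← hax, hxx]
  field_simp
  have h3 : ‖x‖ ^ 3 * ‖x‖⁻¹ ^ 3 = 1 := by rw [← mul_pow, mul_inv_cancel₀ hr, one_pow]
  linear_combination (-((inner ℝ a x : ℝ) * n)) * h3

end GreenAux

noncomputable def greenH (n : ℕ) [NeZero n] (c : ℝ) (η : EuclideanSpace ℝ (Fin n)) : ℝ :=
  c ^ 2 / ‖η‖ ^ 2 - n * (c * η 0) ^ 2 / ‖η‖ ^ 4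

lemma green_integral_H (n : ℕ) [NeZero n] (c : ℝ) :
    ∫ η in Metric.ball (0 : EuclideanSpace ℝ (Fin n)) 1, greenH n c η = 0 := by
  by_cases hInt : IntegrableOn (greenH n c) (Metric.ball 0 1) volume
  swap
  · exact integral_undef hInt
  set T : Fin n → (EuclideanSpace ℝ (Fin n) ≃ₗᵢ[ℝ] EuclideanSpace ℝ (Fin n)) := fun k =>
    LinearIsometryEquiv.piLpCongrLeft 2 ℝ ℝ (Equiv.swap (0 : Fin n) k) with hT
  have hTapp : ∀ (k : Fin n) (η : EuclideanSpace ℝ (Fin n)) (j : Fin n),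
      (T k η) j = η (Equiv.swap (0 : Fin n) k j) := by
    intro k η j
    simp [hT, LinearIsometryEquiv.piLpCongrLeft_apply, Equiv.piCongrLeft'_apply]
  have hTnorm : ∀ (k : Fin n) (η : EuclideanSpace ℝ (Fin n)), ‖T k η‖ = ‖η‖ :=
    fun k η => (T k).norm_map η
  have hTball : ∀ k : Fin n,
      (T k) ⁻¹' (Metric.ball (0 : EuclideanSpace ℝ (Fin n)) 1) = Metric.ball 0 1 := by
    intro k; ext η
    simp [mem_ball_zero_iff, hTnorm]
  have hHT : ∀ (k : Fin n) (η : EuclideanSpace ℝ (Fin n)),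
      greenH n c (T k η) = c ^ 2 / ‖η‖ ^ 2 - n * (c * η k) ^ 2 / ‖η‖ ^ 4 := by
    intro k η
    have h0 : (T k η) (0 : Fin n) = η k := by
      have h := hTapp k η 0
      rwa [Equiv.swap_apply_left] at h
    rw [greenH, hTnorm, h0]
  have hint2 : ∀ k : Fin n,
      IntegrableOn (fun η => greenH n c (T k η)) (Metric.ball 0 1) volume := by
    intro k
    have h := ((T k).measurePreserving.integrableOn_comp_preimage
      ((T k).toHomeomorph.measurableEmbedding) (f := greenH n c) (s := Metric.ball 0 1))
    rw [hTball k] at h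
    exact h.mpr hInt
  have hi3 : ∀ k : Fin n,
      ∫ η in Metric.ball (0 : EuclideanSpace ℝ (Fin n)) 1, greenH n c (T k η)
        = ∫ η in Metric.ball (0 : EuclideanSpace ℝ (Fin n)) 1, greenH n c η := by
    intro k
    have h := (T k).measurePreserving.setIntegral_preimage_emb
      ((T k).toHomeomorph.measurableEmbedding) (greenH n c) (Metric.ball 0 1)
    rw [hTball k] at h
    exact h
  have hsum0 : ∀ η : EuclideanSpace ℝ (Fin n), ∑ k : Fin n, greenH n c (T k η) = 0 := by
    intro η
    by_cases hη : η = 0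
    · subst hη
      have h0 : greenH n c (0 : EuclideanSpace ℝ (Fin n)) = 0 := by simp [greenH]
      simp [map_zero, h0]
    · have hrη : ‖η‖ ≠ 0 := norm_ne_zero_iff.mpr hη
      have hxx : (∑ k : Fin n, η k * η k) = ‖η‖ ^ 2 := by
        have h := real_inner_self_eq_norm_sq η
        rw [PiLp.inner_apply] at h
        simpa [pow_two] using h
      have step : ∀ k : Fin n, c ^ 2 / ‖η‖ ^ 2 - (n : ℝ) * (c * η k) ^ 2 / ‖η‖ ^ 4
          = c ^ 2 / ‖η‖ ^ 2 - ((n : ℝ) * c ^ 2 / ‖η‖ ^ 4) * (η k * η k) := fun k => by ring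
      simp only [hHT, step]
      rw [Finset.sum_sub_distrib, ← Finset.mul_sum, hxx, Finset.sum_const, Finset.card_univ,
        Fintype.card_fin]
      field_simp
      have h3 : ‖η‖ ^ 2 * ‖η‖⁻¹ ^ 2 = 1 := by rw [← mul_pow, mul_inv_cancel₀ hrη, one_pow]
      linear_combination (c ^ 2 * (n : ℝ)) * h3
  have hkey := integral_finset_sum
    (μ := volume.restrict (Metric.ball (0 : EuclideanSpace ℝ (Fin n)) 1)) Finset.univ
    (fun (k : Fin n) _ => hint2 k)
  simp only [hsum0, integral_zero] at hkey
  simp only [hi3] at hkey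
  rw [Finset.sum_const, Finset.card_univ, Fintype.card_fin, nsmul_eq_mul] at hkey
  have hn0 : (n : ℝ) ≠ 0 := Nat.cast_ne_zero.mpr (NeZero.ne n)
  rcases mul_eq_zero.mp hkey.symm with h | h
  · exact absurd h hn0
  · exact h

/-- Green's identity (3.42) from the proof of Lemma 3.7: for `n ≥ 3` and
`f(ξ) = ⟨a, ξ⟩/‖ξ‖`, the integral over the punctured unit ball of
`‖∇f‖² + f Δf` (with respect to Lebesgue measure) vanishes, the boundary term
vanishing since the radial derivative of `f` is zero on the unit sphere. -/
theorem stmt_7 (n : ℕ) (hn : 3 ≤ n) (a : EuclideanSpace ℝ (Fin n)) :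
    ∫ ξ in Metric.ball (0 : EuclideanSpace ℝ (Fin n)) 1 \ {0},
        (‖gradient (fun ξ : EuclideanSpace ℝ (Fin n) => (inner ℝ a ξ : ℝ) / ‖ξ‖) ξ‖ ^ 2 +
          ((inner ℝ a ξ : ℝ) / ‖ξ‖) *
            laplacian (fun ξ : EuclideanSpace ℝ (Fin n) => (inner ℝ a ξ : ℝ) / ‖ξ‖) ξ) = 0 := by
  haveI : NeZero n := ⟨by omega⟩
  haveI : Nontrivial (EuclideanSpace ℝ (Fin n)) := by
    refine ⟨EuclideanSpace.single (0 : Fin n) 1, 0, ?_⟩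
    intro h
    have := congrArg (fun v : EuclideanSpace ℝ (Fin n) => v (0 : Fin n)) h
    simp [EuclideanSpace.single_apply] at this
  by_cases ha : a = 0
  · subst ha
    have hzero : (fun ξ : EuclideanSpace ℝ (Fin n) => (inner ℝ 0 ξ : ℝ) / ‖ξ‖)
        = fun _ => (0 : ℝ) := by
      funext ξ; simp
    rw [hzero]
    simp only [gradient_const, norm_zero, zero_pow, zero_mul, zero_add, laplacian,
      mul_zero]
    simp [laplacian]
  -- main case
  have hball : MeasurableSet (Metric.ball (0 : EuclideanSpace ℝ (Fin n)) 1) := measurableSet_ball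
  have hs : MeasurableSet (Metric.ball (0 : EuclideanSpace ℝ (Fin n)) 1 \ {0}) :=
    hball.diff (measurableSet_singleton 0)
  -- Step 1: pointwise formula on the punctured ball
  rw [setIntegral_congr_fun hs (g := fun ξ : EuclideanSpace ℝ (Fin n) => ‖a‖ ^ 2 / ‖ξ‖ ^ 2
      - n * (inner ℝ a ξ : ℝ) ^ 2 / ‖ξ‖ ^ 4) ?_]
  swap
  · intro ξ hξ
    dsimp only
    have hξ0 : ξ ≠ 0 := by
      intro h; exact hξ.2 (by simp [h])
    have hr : ‖ξ‖ ≠ 0 := norm_ne_zero_iff.mpr hξ0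
    rw [green_gradient_f a hξ0, green_norm_grad_sq a hξ0, green_laplacian_f a hξ0]
    field_simp
    ring
  -- Step 2: drop the puncture
  rw [setIntegral_congr_set (diff_ae_eq_self.mpr (by
    exact measure_mono_null Set.inter_subset_right (measure_singleton (0 : EuclideanSpace ℝ (Fin n)))))]
  have hna : ‖a‖ ≠ 0 := norm_ne_zero_iff.mpr ha
  have hcard : Module.finrank ℝ (EuclideanSpace ℝ (Fin n)) = Fintype.card (Fin n) := by
    simp
  have hON : Orthonormal ℝ
      (Set.restrict {(0 : Fin n)} (fun _ : Fin n => ‖a‖⁻¹ • a)) := by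
    constructor
    · rintro ⟨i, hi⟩
      show ‖‖a‖⁻¹ • a‖ = 1
      rw [norm_smul, norm_inv, norm_norm, inv_mul_cancel₀ hna]
    · rintro ⟨i, hi⟩ ⟨j, hj⟩ hij
      simp only [Set.mem_singleton_iff] at hi hj
      exact absurd (Subtype.ext (hi.trans hj.symm)) hij
  obtain ⟨b, hb⟩ := hON.exists_orthonormalBasis_extension_of_card_eq hcard
  have hb0 : b 0 = ‖a‖⁻¹ • a := hb 0 rfl
  have ha' : a = ‖a‖ • b 0 := by
    rw [hb0, smul_smul, mul_inv_cancel₀ hna, one_smul]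
  have hemb := b.repr.symm.toHomeomorph.measurableEmbedding
  have hpre : (b.repr.symm) ⁻¹' Metric.ball (0 : EuclideanSpace ℝ (Fin n)) 1
      = Metric.ball 0 1 := by
    ext η
    simp [mem_ball_zero_iff, LinearIsometryEquiv.norm_map]
  have hchg := b.measurePreserving_repr_symm.setIntegral_preimage_emb hemb
    (fun ξ : EuclideanSpace ℝ (Fin n) =>
      ‖a‖ ^ 2 / ‖ξ‖ ^ 2 - n * (inner ℝ a ξ : ℝ) ^ 2 / ‖ξ‖ ^ 4)
    (Metric.ball 0 1)
  rw [hpre] at hchg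
  rw [← hchg]
  have hcomp : ∀ η : EuclideanSpace ℝ (Fin n),
      ‖a‖ ^ 2 / ‖b.repr.symm η‖ ^ 2
        - n * (inner ℝ a (b.repr.symm η) : ℝ) ^ 2 / ‖b.repr.symm η‖ ^ 4
      = greenH n ‖a‖ η := by
    intro η
    have h1 : ‖b.repr.symm η‖ = ‖η‖ := b.repr.symm.norm_map η
    have h2 : (inner ℝ a (b.repr.symm η) : ℝ) = ‖a‖ * η 0 := by
      conv_lhs => rw [ha']
      rw [real_inner_smul_left, ← OrthonormalBasis.repr_apply_apply,
        LinearIsometryEquiv.apply_symm_apply]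
    rw [greenH, h1, h2]
  simp only [hcomp]
  exact green_integral_H n ‖a‖
end

section
/- There exists a constant C > 0, depending only on n, such that for every ρ ∈ (0,1) and every ξ ∈ S^{n−1}: ∫_{S^{n−1}} Ψ_ρ(ξ,θ) ‖ξ − θ‖ dσ(θ) ≤ C (1−ρ)^{1/(2n)}. (Property (3) of Lemma 4.5 of the paper.) -/
open MeasureTheory

/-- `α_n`: the total surface measure (`(n-1)`-dimensional Hausdorff measure) of the
unit sphere in `EuclideanSpace ℝ (Fin n)`. -/
noncomputable def sphereVol (n : ℕ) : ℝ :=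
  ((μH[(n : ℝ) - 1] : Measure (EuclideanSpace ℝ (Fin n)))
    (Metric.sphere (0 : EuclideanSpace ℝ (Fin n)) 1)).toReal

/-- The Poisson kernel of the unit ball: `P(x,θ) = (1 − ‖x‖²)/(α_n ‖x − θ‖ⁿ)`. -/
noncomputable def ballPoissonKernel (n : ℕ) (x θ : EuclideanSpace ℝ (Fin n)) : ℝ :=
  (1 - ‖x‖ ^ 2) / (sphereVol n * ‖x - θ‖ ^ n)

/-- `Ψ_ρ(ξ,θ) = P(ρξ, θ)` (equation (4.30) of the paper). -/
noncomputable def Psi (n : ℕ) (ρ : ℝ) (ξ θ : EuclideanSpace ℝ (Fin n)) : ℝ :=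
  ballPoissonKernel n (ρ • ξ) θ

open MeasureTheory Metric Set
open scoped ENNReal NNReal
set_option maxHeartbeats 1000000




private lemma sq_le_imp {a b : ℝ} (ha : 0 ≤ a) (hb : 0 ≤ b) (h : a^2 ≤ b^2) : a ≤ b := by
  nlinarith

private lemma sqrt_half_le {b : ℝ} (hb0 : 0 ≤ b) (hb : b ≤ 1/2) :
    (1:ℝ)/2 ≤ Real.sqrt (1 - b^2) := by
  have h2 : Real.sqrt (1 - b^2) ^ 2 = 1 - b^2 := Real.sq_sqrt (by nlinarith)
  nlinarith [Real.sqrt_nonneg (1 - b^2)]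

private lemma sqrt_one_sub_sq_lip {a b : ℝ} (ha0 : 0 ≤ a) (ha : a ≤ 1/2) (hb0 : 0 ≤ b)
    (hb : b ≤ 1/2) : |Real.sqrt (1 - a^2) - Real.sqrt (1 - b^2)| ≤ |a - b| := by
  wlog hab : b ≤ a generalizing a b
  · rw [abs_sub_comm, abs_sub_comm a b]; exact this hb0 hb ha0 ha (le_of_not_ge hab)
  have h1 : Real.sqrt (1 - a^2) ^ 2 = 1 - a^2 := Real.sq_sqrt (by nlinarith)
  have h2 : Real.sqrt (1 - b^2) ^ 2 = 1 - b^2 := Real.sq_sqrt (by nlinarith)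
  have h3 : Real.sqrt (1 - a^2) ≤ Real.sqrt (1 - b^2) := Real.sqrt_le_sqrt (by nlinarith)
  have h4 : (1:ℝ)/2 ≤ Real.sqrt (1 - b^2) := sqrt_half_le hb0 hb
  have h5 : (1:ℝ)/2 ≤ Real.sqrt (1 - a^2) := sqrt_half_le ha0 ha
  rw [abs_of_nonpos (by linarith), abs_of_nonneg (by linarith)]
  nlinarith [mul_nonneg (sub_nonneg.2 h3)
      (by linarith : (0:ℝ) ≤ Real.sqrt (1 - a^2) + Real.sqrt (1 - b^2) - 1),
    mul_nonneg (sub_nonneg.2 hab) (by linarith : (0:ℝ) ≤ 1 - a - b)]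

private lemma graph_setup (n : ℕ) (hn : 2 ≤ n) (ξ : EuclideanSpace ℝ (Fin n)) (hξ : ‖ξ‖ = 1) :
    ∃ g : EuclideanSpace ℝ (Fin (n-1)) → EuclideanSpace ℝ (Fin n),
      LipschitzOnWith 2 g (closedBall 0 (1/2)) ∧
      (∀ t : ℝ, 0 < t → t ≤ 1/2 →
        sphere (0 : EuclideanSpace ℝ (Fin n)) 1 ∩ closedBall ξ t ⊆ g '' closedBall 0 t) ∧
      ∃ P : EuclideanSpace ℝ (Fin n) → EuclideanSpace ℝ (Fin (n-1)),
        LipschitzWith 1 P ∧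
        closedBall (0 : EuclideanSpace ℝ (Fin (n-1))) (4⁻¹) ⊆
          P '' (sphere (0 : EuclideanSpace ℝ (Fin n)) 1 ∩ closedBall ξ (1/2)) := by
  have hξ0 : ξ ≠ 0 := by
    intro h; rw [h, norm_zero] at hξ; norm_num at hξ
  set K := (Submodule.span ℝ {ξ})ᗮ with hK
  have hm' : Module.finrank ℝ K = n - 1 := by
    have h1 : Module.finrank ℝ (Submodule.span ℝ {ξ}) = 1 := finrank_span_singleton hξ0
    have h2 := Submodule.finrank_add_finrank_orthogonal (K := Submodule.span ℝ {ξ})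
    rw [finrank_euclideanSpace_fin, ← hK] at h2
    omega
  let e : K ≃ₗᵢ[ℝ] EuclideanSpace ℝ (Fin (n-1)) :=
    ((stdOrthonormalBasis ℝ K).reindex (finCongr hm')).repr
  have memK : ∀ z : EuclideanSpace ℝ (Fin n), z - (inner ℝ ξ z : ℝ) • ξ ∈ K := by
    intro z
    rw [hK, Submodule.mem_orthogonal_singleton_iff_inner_right, inner_sub_right,
      real_inner_smul_right, real_inner_self_eq_norm_sq, hξ]
    ring
  have normK : ∀ x : K, ‖(x : EuclideanSpace ℝ (Fin n))‖ = ‖x‖ := fun x => rfl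
  set c : EuclideanSpace ℝ (Fin (n-1)) → ℝ := fun v => Real.sqrt (1 - ‖v‖^2) with hc
  set g : EuclideanSpace ℝ (Fin (n-1)) → EuclideanSpace ℝ (Fin n) :=
    fun v => c v • ξ + ((e.symm v : K) : EuclideanSpace ℝ (Fin n)) with hg
  have hinner0 : ∀ v : EuclideanSpace ℝ (Fin (n-1)),
      (inner ℝ ξ ((e.symm v : K) : EuclideanSpace ℝ (Fin n)) : ℝ) = 0 := by
    intro v
    exact Submodule.mem_orthogonal_singleton_iff_inner_right.mp (SetLike.coe_mem (e.symm v))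
  refine ⟨g, ?_, ?_, ?_⟩
  · -- Lipschitz
    apply LipschitzOnWith.of_dist_le_mul
    intro v hv w hw
    rw [mem_closedBall, dist_zero_right] at hv hw
    rw [dist_eq_norm, dist_eq_norm]
    have hsub : g v - g w = (c v - c w) • ξ +
        ((e.symm v - e.symm w : K) : EuclideanSpace ℝ (Fin n)) := by
      simp only [hg, sub_smul, Submodule.coe_sub]
      abel
    rw [hsub]
    refine (norm_add_le _ _).trans ?_
    have h1 : ‖(c v - c w) • ξ‖ = |c v - c w| := by
      rw [norm_smul, hξ, mul_one, Real.norm_eq_abs]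
    have h2 : ‖((e.symm v - e.symm w : K) : EuclideanSpace ℝ (Fin n))‖ = ‖v - w‖ := by
      rw [normK, ← map_sub, e.symm.norm_map]
    rw [h1, h2]
    have h3 : |c v - c w| ≤ ‖v - w‖ := by
      refine le_trans (sqrt_one_sub_sq_lip (norm_nonneg v) (by linarith) (norm_nonneg w)
        (by linarith)) ?_
      exact abs_norm_sub_norm_le v w
    push_cast
    linarith
  · -- cap covered by graph
    rintro t ht ht' θ ⟨hθS, hθB⟩
    have hθ : ‖θ‖ = 1 := mem_sphere_zero_iff_norm.mp hθS
    set a : ℝ := (inner ℝ ξ θ : ℝ) with ha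
    have hdist : ‖θ - ξ‖ ≤ t := by
      rw [mem_closedBall, dist_eq_norm] at hθB; exact hθB
    have hsq : ‖θ - ξ‖^2 = 2 - 2*a := by
      rw [norm_sub_sq_real, hθ, hξ, real_inner_comm]
      ring
    have hsq2 : ‖θ - ξ‖^2 ≤ t^2 := by
      nlinarith [norm_nonneg (θ - ξ)]
    have hamin : 7/8 ≤ a := by nlinarith
    set w : EuclideanSpace ℝ (Fin n) := θ - a • ξ with hw
    have hwK : w ∈ K := memK θ
    set v := e ⟨w, hwK⟩ with hv
    have hnv : ‖v‖^2 = 1 - a^2 := by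
      have h1 : ‖v‖ = ‖w‖ := by
        rw [hv, e.norm_map]
        exact (normK ⟨w, hwK⟩).symm
      have hba : (inner ℝ θ ξ : ℝ) = a := by rw [real_inner_comm]
      rw [h1, hw, norm_sub_sq_real, real_inner_smul_right, hba, norm_smul, Real.norm_eq_abs,
        hθ, hξ, mul_one, sq_abs]
      ring
    have hvt : ‖v‖ ≤ t := by
      refine sq_le_imp (norm_nonneg v) ht.le ?_
      rw [hnv]; nlinarith
    refine ⟨v, by rwa [mem_closedBall, dist_zero_right], ?_⟩
    have hcv : c v = a := by
      rw [hc]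
      simp only
      rw [hnv, show 1 - (1 - a^2) = a^2 by ring, Real.sqrt_sq (by linarith)]
    show c v • ξ + ((e.symm v : K) : EuclideanSpace ℝ (Fin n)) = θ
    rw [hcv, hv, e.symm_apply_apply]
    show a • ξ + (θ - a • ξ) = θ
    abel
  · -- projection part
    refine ⟨fun x => e ⟨x - (inner ℝ ξ x : ℝ) • ξ, memK x⟩, ?_, ?_⟩
    · apply LipschitzWith.of_dist_le_mul
      intro x y
      rw [dist_eq_norm, dist_eq_norm, ← map_sub, e.norm_map, ← normK]
      have hxy : (⟨x - (inner ℝ ξ x : ℝ) • ξ, memK x⟩ - ⟨y - (inner ℝ ξ y : ℝ) • ξ, memK y⟩ : K)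
          = ⟨(x - y) - (inner ℝ ξ (x - y) : ℝ) • ξ, memK (x - y)⟩ := by
        apply Subtype.ext
        simp only [Submodule.coe_sub]
        rw [inner_sub_right, sub_smul]
        abel
      rw [hxy]
      have key : ‖(x - y) - (inner ℝ ξ (x - y) : ℝ) • ξ‖ ≤ ‖x - y‖ := by
        refine sq_le_imp (norm_nonneg _) (norm_nonneg _) ?_
        rw [norm_sub_sq_real, norm_smul, real_inner_smul_right, real_inner_comm, hξ]
        simp [abs_mul_abs_self, Real.norm_eq_abs]
        nlinarith [sq_nonneg (inner ℝ ξ (x - y) : ℝ), sq_abs (inner ℝ ξ (x - y) : ℝ)]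
      simpa using key
    · intro v hv
      rw [mem_closedBall, dist_zero_right] at hv
      have hv2 : ‖v‖^2 ≤ 1/16 := by nlinarith [norm_nonneg v]
      have hc2 : c v ^ 2 = 1 - ‖v‖^2 := Real.sq_sqrt (by nlinarith)
      have hcmin : 7/8 ≤ c v := by
        refine sq_le_imp (by norm_num) (Real.sqrt_nonneg _) ?_
        rw [hc2]; nlinarith
      set θ := g v with hθdef
      have hiθ : (inner ℝ ξ θ : ℝ) = c v := by
        rw [hθdef, hg]
        simp only
        rw [inner_add_right, real_inner_smul_right, real_inner_self_eq_norm_sq, hξ, hinner0]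
        ring
      have hθn : ‖θ‖^2 = 1 := by
        rw [hθdef, hg]
        simp only
        rw [norm_add_sq_real, real_inner_smul_left, hinner0, norm_smul, normK, e.symm.norm_map,
          hξ, Real.norm_eq_abs]
        rw [abs_of_nonneg (by linarith : (0:ℝ) ≤ c v)]
        nlinarith
      have hθS : θ ∈ sphere (0 : EuclideanSpace ℝ (Fin n)) 1 := by
        rw [mem_sphere_zero_iff_norm]
        have h := Real.sqrt_sq (norm_nonneg θ)
        rw [hθn] at h
        simpa [Real.sqrt_one] using h.symm
      have hθB : θ ∈ closedBall ξ (1/2) := by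
        rw [mem_closedBall, dist_eq_norm]
        refine sq_le_imp (norm_nonneg _) (by norm_num) ?_
        have hsub : θ - ξ = (c v - 1) • ξ + ((e.symm v : K) : EuclideanSpace ℝ (Fin n)) := by
          rw [hθdef, hg]; simp only
          rw [sub_smul, one_smul]; abel
        rw [hsub, norm_add_sq_real, real_inner_smul_left, hinner0, norm_smul, normK,
          e.symm.norm_map, hξ, Real.norm_eq_abs]
        have : |c v - 1| ^ 2 = (c v - 1)^2 := sq_abs _
        nlinarith
      refine ⟨θ, ⟨hθS, hθB⟩, ?_⟩
      have harg : (⟨θ - (inner ℝ ξ θ : ℝ) • ξ, memK θ⟩ : K) = e.symm v := by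
        apply Subtype.ext
        show θ - (inner ℝ ξ θ : ℝ) • ξ = ((e.symm v : K) : EuclideanSpace ℝ (Fin n))
        rw [hiθ]
        show c v • ξ + ((e.symm v : K) : EuclideanSpace ℝ (Fin n)) - c v • ξ
          = ((e.symm v : K) : EuclideanSpace ℝ (Fin n))
        abel
      show e ⟨θ - (inner ℝ ξ θ : ℝ) • ξ, memK θ⟩ = v
      rw [harg, e.apply_symm_apply]


private lemma hdcast {n : ℕ} (hn : 2 ≤ n) : (n:ℝ) - 1 = ((n-1 : ℕ) : ℝ) := by
  rw [Nat.cast_sub (by omega : 1 ≤ n), Nat.cast_one]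

private lemma pi_lip (m : ℕ) :
    LipschitzWith 1 ⇑(WithLp.equiv 2 (Fin m → ℝ)) := PiLp.lipschitzWith_ofLp 2 _

private lemma pi_lip_symm (m : ℕ) (hm : 1 ≤ m) {d : ℝ} (hd : d = (m:ℝ)) (s : Set (EuclideanSpace ℝ (Fin m))) :
    μH[d] s ≤ (m : ℝ≥0∞)^m * μH[d] (⇑(WithLp.equiv 2 (Fin m → ℝ)) '' s) := by
  set eq2 := WithLp.equiv 2 (Fin m → ℝ) with heq2
  have halip := PiLp.antilipschitzWith_ofLp 2 (fun _ : Fin m => ℝ)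
  have hlip2 : LipschitzWith ((Fintype.card (Fin m) : ℝ≥0) ^ (1/(2:ℝ≥0∞)).toReal) ⇑eq2.symm :=
    halip.to_rightInverse eq2.apply_symm_apply
  have hd0 : 0 ≤ d := by rw [hd]; positivity
  calc μH[d] s = μH[d] (⇑eq2.symm '' (⇑eq2 '' s)) := by rw [Equiv.symm_image_image]
    _ ≤ (((Fintype.card (Fin m) : ℝ≥0) ^ (1/(2:ℝ≥0∞)).toReal : ℝ≥0) : ℝ≥0∞)^d *
        μH[d] (⇑eq2 '' s) := hlip2.hausdorffMeasure_image_le hd0 _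
    _ ≤ (m : ℝ≥0∞)^m * μH[d] (⇑eq2 '' s) := by
        gcongr ?_ * _
        have hK : ((Fintype.card (Fin m) : ℝ≥0) ^ (1/(2:ℝ≥0∞)).toReal : ℝ≥0) ≤ (m : ℝ≥0) := by
          rw [Fintype.card_fin]
          calc ((m : ℝ≥0) ^ (1/(2:ℝ≥0∞)).toReal : ℝ≥0) ≤ (m : ℝ≥0) ^ (1:ℝ) := by
                apply NNReal.rpow_le_rpow_of_exponent_le (by exact_mod_cast hm)
                simp [ENNReal.toReal_div]
                norm_num
            _ = (m : ℝ≥0) := NNReal.rpow_one _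
        calc (((Fintype.card (Fin m) : ℝ≥0) ^ (1/(2:ℝ≥0∞)).toReal : ℝ≥0) : ℝ≥0∞)^d
            ≤ ((m : ℝ≥0) : ℝ≥0∞)^d := by
              apply ENNReal.rpow_le_rpow _ hd0
              exact_mod_cast hK
          _ = (m : ℝ≥0∞)^m := by
              rw [hd, ENNReal.rpow_natCast]
              norm_cast

private lemma pi_image_ball (m : ℕ) {t : ℝ} (ht : 0 ≤ t) :
    ⇑(WithLp.equiv 2 (Fin m → ℝ)) '' closedBall (0 : EuclideanSpace ℝ (Fin m)) t ⊆
      closedBall (0 : Fin m → ℝ) t := by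
  rintro _ ⟨x, hx, rfl⟩
  set eq2 := WithLp.equiv 2 (Fin m → ℝ)
  have h0 : eq2 (0 : EuclideanSpace ℝ (Fin m)) = 0 := rfl
  rw [mem_closedBall, ← h0]
  calc dist (eq2 x) (eq2 0) ≤ 1 * dist x 0 := (pi_lip m).dist_le_mul x 0
    _ ≤ t := by rw [one_mul]; exact mem_closedBall.mp hx

private lemma pi_measure_ball (m : ℕ) {t : ℝ} (ht : 0 ≤ t) {d : ℝ} (hd : d = (m:ℝ)) :
    μH[d] (closedBall (0 : Fin m → ℝ) t) = ENNReal.ofReal ((2*t)^m) := by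
  rw [hd, show ((m:ℕ):ℝ) = ((Fintype.card (Fin m)):ℝ) by simp, hausdorffMeasure_pi_real,
    Real.volume_pi_closedBall _ ht, Fintype.card_fin]

private lemma cap_small (n : ℕ) (hn : 2 ≤ n) (ξ : EuclideanSpace ℝ (Fin n)) (hξ : ‖ξ‖ = 1)
    {t : ℝ} (ht : 0 < t) (ht' : t ≤ 1/2) :
    μH[(n:ℝ)-1] (sphere (0 : EuclideanSpace ℝ (Fin n)) 1 ∩ closedBall ξ t) ≤
      ENNReal.ofReal ((4*(n:ℝ))^(n-1) * t^(n-1)) := by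
  obtain ⟨g, hg, hcap, -⟩ := graph_setup n hn ξ hξ
  have hm1 : 1 ≤ n - 1 := by omega
  have hd : (n:ℝ) - 1 = ((n-1:ℕ):ℝ) := hdcast hn
  have hd0 : (0:ℝ) ≤ (n:ℝ) - 1 := by rw [hd]; positivity
  calc μH[(n:ℝ)-1] (sphere (0 : EuclideanSpace ℝ (Fin n)) 1 ∩ closedBall ξ t)
      ≤ μH[(n:ℝ)-1] (g '' closedBall 0 t) := measure_mono (hcap t ht ht')
    _ ≤ ((2:ℝ≥0) : ℝ≥0∞)^((n:ℝ)-1) * μH[(n:ℝ)-1] (closedBall (0 : EuclideanSpace ℝ (Fin (n-1))) t) :=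
        (hg.mono (closedBall_subset_closedBall (by linarith))).hausdorffMeasure_image_le hd0
    _ ≤ ((2:ℝ≥0) : ℝ≥0∞)^((n:ℝ)-1) * (((n-1 : ℕ) : ℝ≥0∞)^(n-1) *
          μH[(n:ℝ)-1] (⇑(WithLp.equiv 2 (Fin (n-1) → ℝ)) '' closedBall 0 t)) := by
        gcongr
        exact pi_lip_symm (n-1) hm1 hd _
    _ ≤ ((2:ℝ≥0) : ℝ≥0∞)^((n:ℝ)-1) * (((n-1 : ℕ) : ℝ≥0∞)^(n-1) *
          μH[(n:ℝ)-1] (closedBall (0 : Fin (n-1) → ℝ) t)) := by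
        exact mul_le_mul' le_rfl (mul_le_mul' le_rfl (measure_mono (pi_image_ball (n-1) ht.le)))
    _ = (2 : ℝ≥0∞)^(n-1) * (((n-1 : ℕ) : ℝ≥0∞)^(n-1) * ENNReal.ofReal ((2*t)^(n-1))) := by
        rw [pi_measure_ball (n-1) ht.le hd, hd, ENNReal.rpow_natCast]
        norm_cast
    _ ≤ ENNReal.ofReal ((4*(n:ℝ))^(n-1) * t^(n-1)) := by
        have h2 : (2 : ℝ≥0∞)^(n-1) = ENNReal.ofReal ((2:ℝ)^(n-1)) := by
          rw [ENNReal.ofReal_pow (by norm_num)]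
          norm_num
        have h3 : ((n-1 : ℕ) : ℝ≥0∞)^(n-1) = ENNReal.ofReal (((n-1:ℕ):ℝ)^(n-1)) := by
          rw [ENNReal.ofReal_pow (by positivity), ENNReal.ofReal_natCast]
        rw [h2, h3, ← ENNReal.ofReal_mul (by positivity), ← ENNReal.ofReal_mul (by positivity)]
        apply ENNReal.ofReal_le_ofReal
        have h1 : (2:ℝ)^(n-1) * (((n-1:ℕ):ℝ)^(n-1) * (2*t)^(n-1)) = (2*((n-1:ℕ):ℝ)*(2*t))^(n-1) := by
          rw [mul_pow, mul_pow, mul_pow]; ring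
        have h2' : ((4:ℝ)*(n:ℝ))^(n-1) * t^(n-1) = (4*(n:ℝ)*t)^(n-1) := (mul_pow (4*(n:ℝ)) t (n-1)).symm
        rw [h1, h2']
        apply pow_le_pow_left₀ (by positivity)
        have hmn : ((n-1:ℕ):ℝ) ≤ (n:ℝ) := by exact_mod_cast Nat.sub_le n 1
        nlinarith [ht.le]

private lemma sphere_ne_top (n : ℕ) (hn : 2 ≤ n) :
    μH[(n:ℝ)-1] (sphere (0 : EuclideanSpace ℝ (Fin n)) 1) ≠ ⊤ := by
  obtain ⟨b, hbS, hbfin, hcov⟩ :=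
    (isCompact_sphere (0 : EuclideanSpace ℝ (Fin n)) 1).elim_finite_subcover_image
      (c := fun ξ => ball ξ (1/2)) (fun ξ _ => isOpen_ball)
      (fun θ hθ => mem_biUnion hθ (mem_ball_self (by norm_num)))
  have hsub : sphere (0 : EuclideanSpace ℝ (Fin n)) 1 ⊆
      ⋃ ξ ∈ hbfin.toFinset, sphere (0 : EuclideanSpace ℝ (Fin n)) 1 ∩ closedBall ξ (1/2) := by
    intro θ hθ
    obtain ⟨ξ, hξb, hθξ⟩ := mem_iUnion₂.mp (hcov hθ)
    exact mem_iUnion₂.mpr ⟨ξ, hbfin.mem_toFinset.mpr hξb, hθ, ball_subset_closedBall hθξ⟩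
  refine (lt_of_le_of_lt (measure_mono hsub)
    (lt_of_le_of_lt (measure_biUnion_finset_le _ _) ?_)).ne
  apply ENNReal.sum_lt_top.mpr
  intro ξ hξ
  exact lt_of_le_of_lt (cap_small n hn ξ
    (mem_sphere_zero_iff_norm.mp (hbS (hbfin.mem_toFinset.mp hξ))) (by norm_num) le_rfl)
    ENNReal.ofReal_lt_top

private lemma sphere_pos (n : ℕ) (hn : 2 ≤ n) :
    0 < μH[(n:ℝ)-1] (sphere (0 : EuclideanSpace ℝ (Fin n)) 1) := by
  set m := n - 1 with hm
  have hm1 : 1 ≤ m := by omega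
  have hd : (n:ℝ) - 1 = ((m:ℕ):ℝ) := hdcast hn
  have hd0 : (0:ℝ) ≤ (n:ℝ) - 1 := by rw [hd]; positivity
  set ξ : EuclideanSpace ℝ (Fin n) := EuclideanSpace.single ⟨0, by omega⟩ (1:ℝ) with hξdef
  have hξ : ‖ξ‖ = 1 := by rw [hξdef, EuclideanSpace.norm_single]; norm_num
  obtain ⟨g, -, -, P, hP, hPim⟩ := graph_setup n hn ξ hξ
  have hmpos : (0:ℝ) < (m:ℝ) := by exact_mod_cast hm1
  have hsm : 0 < Real.sqrt m := Real.sqrt_pos.mpr hmpos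
  set s : ℝ := (4 * Real.sqrt m)⁻¹ with hs
  have hspos : 0 < s := by positivity
  set eq2 := WithLp.equiv 2 (Fin m → ℝ) with heq2
  have hincl : closedBall (0 : Fin m → ℝ) s ⊆
      ⇑eq2 '' closedBall (0 : EuclideanSpace ℝ (Fin m)) 4⁻¹ := by
    intro x hx
    refine ⟨eq2.symm x, ?_, eq2.apply_symm_apply x⟩
    rw [mem_closedBall, dist_zero_right]
    have hcoord : ∀ i, |(eq2.symm x) i| ≤ s := by
      intro i
      have h := (dist_pi_le_iff hspos.le).mp (mem_closedBall.mp hx) i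
      have hxi : (eq2.symm x) i = x i := rfl
      rw [hxi]
      simpa [Real.dist_eq] using h
    rw [EuclideanSpace.norm_eq]
    have hsum : (∑ i, ‖(eq2.symm x) i‖^2) ≤ (m:ℝ) * s^2 := by
      calc (∑ i, ‖(eq2.symm x) i‖^2) ≤ ∑ _i : Fin m, s^2 :=
            Finset.sum_le_sum (fun i _ => by
              have h := hcoord i
              rw [Real.norm_eq_abs]
              nlinarith [abs_nonneg ((eq2.symm x) i)])
        _ = (m:ℝ) * s^2 := by
            rw [Finset.sum_const, Finset.card_univ, Fintype.card_fin, nsmul_eq_mul]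
    have hms : (m:ℝ) * s^2 = 1/16 := by
      have hsq : Real.sqrt m ^ 2 = (m:ℝ) := Real.sq_sqrt hmpos.le
      rw [hs, inv_pow, mul_pow, hsq]
      field_simp
      ring
    refine le_trans (Real.sqrt_le_sqrt hsum) ?_
    rw [hms, show (1/16:ℝ) = (1/4)^2 by norm_num, Real.sqrt_sq (by norm_num)]
    norm_num
  have h1 : (0:ℝ≥0∞) < volume (closedBall (0 : Fin m → ℝ) s) := by
    rw [Real.volume_pi_closedBall _ hspos.le]
    apply ENNReal.ofReal_pos.mpr
    positivity
  have h2 : volume (closedBall (0 : Fin m → ℝ) s) = μH[(n:ℝ)-1] (closedBall (0 : Fin m → ℝ) s) := by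
    rw [hd, show ((m:ℕ):ℝ) = ((Fintype.card (Fin m)):ℝ) by simp, hausdorffMeasure_pi_real]
  refine lt_of_lt_of_le (h2 ▸ h1) ?_
  calc μH[(n:ℝ)-1] (closedBall (0 : Fin m → ℝ) s)
      ≤ μH[(n:ℝ)-1] (⇑eq2 '' closedBall (0 : EuclideanSpace ℝ (Fin m)) 4⁻¹) :=
        measure_mono hincl
    _ ≤ ((1:ℝ≥0) : ℝ≥0∞)^((n:ℝ)-1) *
          μH[(n:ℝ)-1] (closedBall (0 : EuclideanSpace ℝ (Fin m)) 4⁻¹) :=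
        (pi_lip m).hausdorffMeasure_image_le hd0 _
    _ = μH[(n:ℝ)-1] (closedBall (0 : EuclideanSpace ℝ (Fin m)) 4⁻¹) := by
        simp [ENNReal.one_rpow]
    _ ≤ μH[(n:ℝ)-1] (P '' (sphere (0 : EuclideanSpace ℝ (Fin n)) 1 ∩ closedBall ξ (1/2))) :=
        measure_mono hPim
    _ ≤ ((1:ℝ≥0) : ℝ≥0∞)^((n:ℝ)-1) *
          μH[(n:ℝ)-1] (sphere (0 : EuclideanSpace ℝ (Fin n)) 1 ∩ closedBall ξ (1/2)) :=
        hP.hausdorffMeasure_image_le hd0 _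
    _ ≤ μH[(n:ℝ)-1] (sphere (0 : EuclideanSpace ℝ (Fin n)) 1) := by
        simp only [ENNReal.coe_one, ENNReal.one_rpow, one_mul]
        exact measure_mono inter_subset_left

private noncomputable def Acap (n : ℕ) : ℝ :=
  max ((4*(n:ℝ))^(n-1)) ((μH[(n:ℝ)-1] (sphere (0 : EuclideanSpace ℝ (Fin n)) 1)).toReal * 2^(n-1))

private lemma Acap_pos (n : ℕ) (hn : 2 ≤ n) : 0 < Acap n := by
  have h4 : (0:ℝ) < 4*(n:ℝ) := by
    have : (2:ℝ) ≤ n := by exact_mod_cast hn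
    linarith
  exact lt_max_iff.mpr (Or.inl (pow_pos h4 _))

private lemma cap_le (n : ℕ) (hn : 2 ≤ n) (ξ : EuclideanSpace ℝ (Fin n)) (hξ : ‖ξ‖ = 1)
    {t : ℝ} (ht : 0 < t) :
    μH[(n:ℝ)-1] (sphere (0:EuclideanSpace ℝ (Fin n)) 1 ∩ closedBall ξ t) ≤
      ENNReal.ofReal (Acap n * t^(n-1)) := by
  by_cases ht' : t ≤ 1/2
  · refine le_trans (cap_small n hn ξ hξ ht ht') (ENNReal.ofReal_le_ofReal ?_)
    exact mul_le_mul_of_nonneg_right (le_max_left _ _) (by positivity)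
  · push_neg at ht'
    set V := (μH[(n:ℝ)-1] (sphere (0:EuclideanSpace ℝ (Fin n)) 1)).toReal with hV
    calc μH[(n:ℝ)-1] (sphere (0:EuclideanSpace ℝ (Fin n)) 1 ∩ closedBall ξ t)
        ≤ μH[(n:ℝ)-1] (sphere (0:EuclideanSpace ℝ (Fin n)) 1) := measure_mono inter_subset_left
      _ = ENNReal.ofReal V := by rw [hV, ENNReal.ofReal_toReal (sphere_ne_top n hn)]
      _ ≤ ENNReal.ofReal (Acap n * t^(n-1)) := by
          apply ENNReal.ofReal_le_ofReal
          have h1 : (1:ℝ) ≤ (2*t)^(n-1) := by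
            calc (1:ℝ) = 1^(n-1) := (one_pow _).symm
            _ ≤ (2*t)^(n-1) := pow_le_pow_left₀ (by norm_num) (by linarith) _
          calc V ≤ V * (2*t)^(n-1) := le_mul_of_one_le_right ENNReal.toReal_nonneg h1
            _ = (V * 2^(n-1)) * t^(n-1) := by rw [mul_pow]; ring
            _ ≤ Acap n * t^(n-1) :=
                mul_le_mul_of_nonneg_right (le_max_right _ _) (by positivity)

private lemma sphereVol_pos (n : ℕ) (hn : 2 ≤ n) : 0 < sphereVol n :=
  ENNReal.toReal_pos (sphere_pos n hn).ne' (sphere_ne_top n hn)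

private lemma norm_ident {n : ℕ} (ρ : ℝ) (ξ θ : EuclideanSpace ℝ (Fin n)) (hξ : ‖ξ‖ = 1)
    (hθ : ‖θ‖ = 1) : ‖ρ • ξ - θ‖^2 = (1-ρ)^2 + ρ * ‖ξ - θ‖^2 := by
  have h1 : ‖ρ • ξ - θ‖^2 = ‖ρ • ξ‖^2 - 2*(ρ * (inner ℝ ξ θ : ℝ)) + ‖θ‖^2 := by
    rw [norm_sub_sq_real, real_inner_smul_left]
  have h2 : ‖ξ - θ‖^2 = ‖ξ‖^2 - 2*(inner ℝ ξ θ : ℝ) + ‖θ‖^2 := norm_sub_sq_real ξ θ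
  have h3 : ‖ρ • ξ‖^2 = ρ^2 := by rw [norm_smul, hξ, mul_one, Real.norm_eq_abs, sq_abs]
  rw [h1, h3, h2, hξ, hθ]
  ring

private lemma low1 {n : ℕ} {ρ : ℝ} (hρ0 : 0 ≤ ρ) (hρ1 : ρ ≤ 1) {ξ θ : EuclideanSpace ℝ (Fin n)}
    (hξ : ‖ξ‖ = 1) (hθ : ‖θ‖ = 1) : 1 - ρ ≤ ‖ρ • ξ - θ‖ := by
  refine sq_le_imp (by linarith) (norm_nonneg _) ?_
  rw [norm_ident ρ ξ θ hξ hθ]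
  nlinarith [mul_nonneg hρ0 (sq_nonneg ‖ξ - θ‖)]

private lemma low2 {n : ℕ} {ρ : ℝ} (hρ0 : 0 ≤ ρ) (hρ1 : ρ ≤ 1) {ξ θ : EuclideanSpace ℝ (Fin n)}
    (hξ : ‖ξ‖ = 1) (hθ : ‖θ‖ = 1) : ρ * ‖ξ - θ‖ ≤ ‖ρ • ξ - θ‖ := by
  refine sq_le_imp (by positivity) (norm_nonneg _) ?_
  rw [norm_ident ρ ξ θ hξ hθ]
  nlinarith [sq_nonneg (1-ρ),
    mul_nonneg (mul_nonneg hρ0 (by linarith : (0:ℝ) ≤ 1 - ρ)) (sq_nonneg ‖ξ - θ‖)]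

private lemma psi_nonneg (n : ℕ) {ρ : ℝ} (hρ0 : 0 ≤ ρ) (hρ1 : ρ ≤ 1)
    {ξ : EuclideanSpace ℝ (Fin n)} (hξ : ‖ξ‖ = 1) (θ : EuclideanSpace ℝ (Fin n)) :
    0 ≤ Psi n ρ ξ θ * ‖ξ - θ‖ := by
  have hsm : ‖ρ • ξ‖ = ρ := by rw [norm_smul, hξ, mul_one, Real.norm_eq_abs, abs_of_nonneg hρ0]
  rw [Psi, ballPoissonKernel, hsm]
  apply mul_nonneg _ (norm_nonneg _)
  apply div_nonneg (by nlinarith)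
  apply mul_nonneg ENNReal.toReal_nonneg (by positivity)

private lemma psi_le (n : ℕ) {ρ : ℝ} (hρ0 : 0 ≤ ρ) (hρ1 : ρ ≤ 1)
    {ξ θ : EuclideanSpace ℝ (Fin n)} (hξ : ‖ξ‖ = 1)
    {D u : ℝ} (hD : 0 < D) (hDle : D ≤ ‖ρ • ξ - θ‖^n) (hu : ‖ξ - θ‖ ≤ u)
    (hα : 0 < sphereVol n) :
    Psi n ρ ξ θ * ‖ξ - θ‖ ≤ 2*(1-ρ)*u / (sphereVol n * D) := by
  have hsm : ‖ρ • ξ‖ = ρ := by rw [norm_smul, hξ, mul_one, Real.norm_eq_abs, abs_of_nonneg hρ0]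
  have hexp : Psi n ρ ξ θ * ‖ξ - θ‖ = (1 - ρ^2) * ‖ξ - θ‖ / (sphereVol n * ‖ρ • ξ - θ‖^n) := by
    rw [Psi, ballPoissonKernel, hsm, div_mul_eq_mul_div]
  have hu0 : (0:ℝ) ≤ u := le_trans (norm_nonneg _) hu
  rw [hexp]
  apply div_le_div₀ (by nlinarith [mul_nonneg (sub_nonneg.2 hρ1) hu0])
  · nlinarith [mul_nonneg (mul_nonneg (sub_nonneg.2 hρ1) (sub_nonneg.2 hρ1)) hu0,
      mul_le_mul_of_nonneg_left hu (by nlinarith : (0:ℝ) ≤ 1 - ρ^2)]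
  · positivity
  · exact mul_le_mul_of_nonneg_left hDle hα.le

private lemma setLint_le {α : Type*} [MeasurableSpace α] (μ : Measure α) {s : Set α}
    (hs : MeasurableSet s) {f : α → ℝ} {c : ℝ} (hc : 0 ≤ c) (h : ∀ x ∈ s, f x ≤ c) :
    ∫⁻ x in s, ENNReal.ofReal (f x) ∂μ ≤ ENNReal.ofReal c * μ s := by
  calc ∫⁻ x in s, ENNReal.ofReal (f x) ∂μ
      ≤ ∫⁻ _x in s, ENNReal.ofReal c ∂μ := lintegral_mono_ae
        ((ae_restrict_iff' hs).mpr (ae_of_all _ (fun x hx => ENNReal.ofReal_le_ofReal (h x hx))))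
    _ = ENNReal.ofReal c * μ s := by rw [lintegral_const, Measure.restrict_apply_univ]

private lemma integral_le_of_lintegral {α : Type*} [MeasurableSpace α] (μ : Measure α)
    {s : Set α} (hs : MeasurableSet s) {f : α → ℝ} (hf : ∀ x ∈ s, 0 ≤ f x) {B : ℝ} (hB : 0 ≤ B)
    (h : ∫⁻ x in s, ENNReal.ofReal (f x) ∂μ ≤ ENNReal.ofReal B) : ∫ x in s, f x ∂μ ≤ B := by
  by_cases hi : Integrable f (μ.restrict s)
  · rw [integral_eq_lintegral_of_nonneg_ae ((ae_restrict_iff' hs).mpr (ae_of_all _ hf))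
      hi.aestronglyMeasurable]
    exact ENNReal.toReal_le_of_le_ofReal hB h
  · rw [integral_undef hi]; exact hB

/-- Property (3) of Lemma 4.5: there is a constant `C > 0` depending only on `n`
such that for every `ρ ∈ (0,1)` and every `ξ` on the unit sphere,
`∫_{S^{n-1}} Ψ_ρ(ξ,θ) ‖ξ − θ‖ dσ(θ) ≤ C (1−ρ)^{1/(2n)}`. -/
theorem stmt_10 (n : ℕ) (hn : 2 ≤ n) :
    ∃ C : ℝ, 0 < C ∧ ∀ ρ ∈ Set.Ioo (0 : ℝ) 1,
      ∀ ξ ∈ Metric.sphere (0 : EuclideanSpace ℝ (Fin n)) 1,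
        ∫ θ in Metric.sphere (0 : EuclideanSpace ℝ (Fin n)) 1,
            Psi n ρ ξ θ * ‖ξ - θ‖ ∂(μH[(n : ℝ) - 1]) ≤
          C * (1 - ρ) ^ ((1 : ℝ) / (2 * n)) := by
  have hα := sphereVol_pos n hn
  set α := sphereVol n with hαdef
  set A := Acap n with hA
  have hA0 : 0 ≤ A := (Acap_pos n hn).le
  set V := (μH[(n:ℝ)-1] (sphere (0 : EuclideanSpace ℝ (Fin n)) 1)).toReal with hV
  have hV0 : 0 ≤ V := ENNReal.toReal_nonneg
  set B := 4^n * A / α with hB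
  have hB0 : 0 ≤ B := by
    rw [hB]; exact div_nonneg (by positivity) hα.le
  have hc1 : 0 ≤ 2*A/α := div_nonneg (by linarith) hα.le
  have hc2 : 0 ≤ 2^(n+3)*V/α := div_nonneg (by positivity) hα.le
  set C := 2*A/α + 2^(n+3)*V/α + 2*B + 1 with hC
  have hC0 : 0 < C := by rw [hC]; linarith
  refine ⟨C, hC0, ?_⟩
  rintro ρ ⟨hρ0, hρ1⟩ ξ hξS
  have hξ : ‖ξ‖ = 1 := mem_sphere_zero_iff_norm.mp hξS
  have hn1 : (1:ℝ) ≤ n := by exact_mod_cast (by omega : 1 ≤ n)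
  set r := 1 - ρ with hr
  have hr0 : 0 < r := by rw [hr]; linarith
  have hr1 : r ≤ 1 := by rw [hr]; linarith
  have hexp0 : (0:ℝ) < 1/(2*(n:ℝ)) := by positivity
  have hexp1 : (1:ℝ)/(2*(n:ℝ)) ≤ 1 := by
    rw [div_le_one (by positivity)]; linarith
  have hexph : (1:ℝ)/(2*(n:ℝ)) ≤ 1/2 := by
    rw [div_le_div_iff₀ (by positivity) (by norm_num)]; linarith
  set δ := r ^ ((1:ℝ)/(2*(n:ℝ))) with hδ
  have hδ0 : 0 < δ := Real.rpow_pos_of_pos hr0 _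
  have hrδ : r ≤ δ := by
    calc r = r ^ (1:ℝ) := (Real.rpow_one r).symm
      _ ≤ δ := Real.rpow_le_rpow_of_exponent_ge hr0 hr1 hexp1
  have hSm : MeasurableSet (Metric.sphere (0 : EuclideanSpace ℝ (Fin n)) 1) :=
    (isClosed_sphere).measurableSet
  set F : EuclideanSpace ℝ (Fin n) → ℝ := fun θ => Psi n ρ ξ θ * ‖ξ - θ‖ with hF
  have hCδ : (0:ℝ) ≤ C * δ := mul_nonneg hC0.le hδ0.le
  apply integral_le_of_lintegral _ hSm
    (fun θ _ => psi_nonneg n hρ0.le hρ1.le hξ θ) hCδ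
  -- main lintegral estimate
  set S := Metric.sphere (0 : EuclideanSpace ℝ (Fin n)) 1 with hSdef
  by_cases hhalf : ρ < 1/2
  · -- easy case : ρ < 1/2, so r ≥ 1/2, δ ≥ 1/2
    have hb : ∀ θ ∈ S, F θ ≤ 2^(n+2)/α := by
      intro θ hθ
      have hθn : ‖θ‖ = 1 := mem_sphere_zero_iff_norm.mp hθ
      refine le_trans (psi_le n (D := ((1:ℝ)/2)^n) (u := 2) hρ0.le hρ1.le hξ (by positivity) ?_ ?_ hα) ?_
      · apply pow_le_pow_left₀ (by norm_num)
        have h1 := low1 hρ0.le hρ1.le hξ hθn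
        rw [← hr] at h1
        linarith
      · calc ‖ξ - θ‖ ≤ ‖ξ‖ + ‖θ‖ := norm_sub_le ξ θ
          _ = 2 := by rw [hξ, hθn]; norm_num
      · have hkey : 2*(1-ρ)*2 ≤ 2^(n+2)*((1:ℝ)/2)^n := by
          have h2 : (2:ℝ)^(n+2)*((1:ℝ)/2)^n = 4 := by
            rw [div_pow, one_pow, pow_add]
            field_simp
            ring
          rw [h2]; linarith
        calc 2*(1-ρ)*2/(α*(1/2)^n) ≤ (2^(n+2)*((1:ℝ)/2)^n)/(α*(1/2)^n) := by
              exact (div_le_div_iff_of_pos_right (by positivity)).mpr hkey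
          _ = 2^(n+2)/α := by
              rw [mul_comm α _, ← div_div]
              congr 1
              rw [mul_div_assoc, div_self (by positivity : ((1:ℝ)/2)^n ≠ 0), mul_one]
    have hδhalf : (1:ℝ)/2 ≤ δ := by
      have h1 : ((1:ℝ)/2) ^ ((1:ℝ)/(2*(n:ℝ))) ≤ δ :=
        Real.rpow_le_rpow (by norm_num) (by rw [hr]; linarith) hexp0.le
      have h2 : (1:ℝ)/2 ≤ ((1:ℝ)/2) ^ ((1:ℝ)/(2*(n:ℝ))) := by
        calc (1:ℝ)/2 = ((1:ℝ)/2)^(1:ℝ) := (Real.rpow_one _).symm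
          _ ≤ ((1:ℝ)/2) ^ ((1:ℝ)/(2*(n:ℝ))) :=
            Real.rpow_le_rpow_of_exponent_ge (by norm_num) (by norm_num) hexp1
      linarith
    calc ∫⁻ θ in S, ENNReal.ofReal (F θ) ∂μH[(n:ℝ)-1]
        ≤ ENNReal.ofReal (2^(n+2)/α) * μH[(n:ℝ)-1] S :=
          setLint_le _ hSm (by positivity) hb
      _ ≤ ENNReal.ofReal (2^(n+2)/α) * ENNReal.ofReal V := by
          apply mul_le_mul' le_rfl
          exact le_of_eq (ENNReal.ofReal_toReal (sphere_ne_top n hn)).symm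
      _ = ENNReal.ofReal (2^(n+2)/α * V) := (ENNReal.ofReal_mul (by positivity)).symm
      _ ≤ ENNReal.ofReal (C * δ) := by
          apply ENNReal.ofReal_le_ofReal
          have hkey : 2^(n+3)*V/α * (1/2) ≤ 2^(n+3)*V/α * δ :=
            mul_le_mul_of_nonneg_left hδhalf hc2
          have hid : 2^(n+2)/α * V = 2^(n+3)*V/α * (1/2) := by
            rw [pow_succ]; ring
          rw [hid, hC]
          nlinarith [mul_nonneg hc1 hδ0.le, mul_nonneg (mul_nonneg (by norm_num : (0:ℝ) ≤ 2) hB0) hδ0.le, hδ0.le]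
  · -- hard case : 1/2 ≤ ρ
    push_neg at hhalf
    set core := S ∩ closedBall ξ r with hcoredef
    set far := S \ closedBall ξ δ with hfardef
    set Aj : ℕ → Set (EuclideanSpace ℝ (Fin n)) :=
      fun j => (S ∩ closedBall ξ (min (r*2^(j+1)) δ)) \ closedBall ξ (r*2^j) with hAjdef
    have hnorm_dist : ∀ θ : EuclideanSpace ℝ (Fin n), ‖ξ - θ‖ = dist θ ξ := by
      intro θ; rw [dist_eq_norm, norm_sub_rev]
    have hcover : S ⊆ core ∪ (far ∪ ⋃ j, Aj j) := by
      intro θ hθ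
      by_cases h1 : dist θ ξ ≤ r
      · exact Or.inl ⟨hθ, mem_closedBall.mpr h1⟩
      push_neg at h1
      by_cases h2 : δ < dist θ ξ
      · exact Or.inr (Or.inl ⟨hθ, fun hc => absurd (mem_closedBall.mp hc) (not_le.mpr h2)⟩)
      push_neg at h2
      have hex : ∃ k : ℕ, dist θ ξ ≤ r * 2^k := by
        obtain ⟨k, hk⟩ := pow_unbounded_of_one_lt (dist θ ξ / r) (by norm_num : (1:ℝ) < 2)
        rw [div_lt_iff₀ hr0] at hk
        exact ⟨k, by nlinarith⟩
      have hkpos : Nat.find hex ≠ 0 := by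
        intro h0
        have := Nat.find_spec hex
        rw [h0] at this
        simp at this
        linarith
      refine Or.inr (Or.inr (mem_iUnion.mpr ⟨Nat.find hex - 1, ⟨⟨hθ, ?_⟩, ?_⟩⟩))
      · rw [mem_closedBall]
        refine le_min ?_ h2
        have hkk : Nat.find hex - 1 + 1 = Nat.find hex := by omega
        rw [hkk]
        exact Nat.find_spec hex
      · intro hc
        exact (Nat.find_min hex (by omega : Nat.find hex - 1 < Nat.find hex))
          (mem_closedBall.mp hc)
    have hsplit : ∫⁻ θ in S, ENNReal.ofReal (F θ) ∂μH[(n:ℝ)-1] ≤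
        (∫⁻ θ in core, ENNReal.ofReal (F θ) ∂μH[(n:ℝ)-1]) +
        ((∫⁻ θ in far, ENNReal.ofReal (F θ) ∂μH[(n:ℝ)-1]) +
         ∑' j, ∫⁻ θ in Aj j, ENNReal.ofReal (F θ) ∂μH[(n:ℝ)-1]) := by
      calc ∫⁻ θ in S, ENNReal.ofReal (F θ) ∂μH[(n:ℝ)-1]
          ≤ ∫⁻ θ in core ∪ (far ∪ ⋃ j, Aj j), ENNReal.ofReal (F θ) ∂μH[(n:ℝ)-1] :=
            lintegral_mono' (Measure.restrict_mono hcover le_rfl) (le_refl _)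
        _ ≤ _ := by
            refine le_trans (lintegral_union_le _ _ _) (add_le_add_right ?_ _)
            refine le_trans (lintegral_union_le _ _ _) (add_le_add_right ?_ _)
            exact lintegral_iUnion_le _ _
    -- core bound
    have hcoreM : MeasurableSet core := hSm.inter measurableSet_closedBall
    have hcore : ∫⁻ θ in core, ENNReal.ofReal (F θ) ∂μH[(n:ℝ)-1] ≤
        ENNReal.ofReal (2*A*δ/α) := by
      have hbd : ∀ θ ∈ core, F θ ≤ 2*r*r/(α * r^n) := by
        rintro θ ⟨hθS', hθB⟩
        have hθn : ‖θ‖ = 1 := mem_sphere_zero_iff_norm.mp hθS'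
        refine psi_le n hρ0.le hρ1.le hξ (by positivity) ?_ ?_ hα
        · refine pow_le_pow_left₀ hr0.le ?_ n
          have h1 := low1 hρ0.le hρ1.le hξ hθn
          rw [← hr] at h1; exact h1
        · rw [hnorm_dist θ]
          exact mem_closedBall.mp hθB
      calc ∫⁻ θ in core, ENNReal.ofReal (F θ) ∂μH[(n:ℝ)-1]
          ≤ ENNReal.ofReal (2*r*r/(α * r^n)) * μH[(n:ℝ)-1] core :=
            setLint_le _ hcoreM (by positivity) hbd
        _ ≤ ENNReal.ofReal (2*r*r/(α * r^n)) * ENNReal.ofReal (A * r^(n-1)) :=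
            mul_le_mul' le_rfl (cap_le n hn ξ hξ hr0)
        _ = ENNReal.ofReal (2*r*r/(α * r^n) * (A * r^(n-1))) :=
            (ENNReal.ofReal_mul (by positivity)).symm
        _ ≤ ENNReal.ofReal (2*A*δ/α) := by
            apply ENNReal.ofReal_le_ofReal
            have hrn : r^n = r^(n-1) * r := by
              conv_lhs => rw [show n = (n-1)+1 by omega]
              rw [pow_succ]
            have heq : 2*r*r/(α * r^n) * (A * r^(n-1)) = 2*A*r/α := by
              rw [hrn]
              have : r^(n-1) ≠ 0 := by positivity
              field_simp
            rw [heq]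
            apply (div_le_div_iff_of_pos_right hα).mpr
            nlinarith [mul_le_mul_of_nonneg_left hrδ hA0]
    -- far bound
    have hδn : δ^n = r ^ ((1:ℝ)/2) := by
      rw [hδ, ← Real.rpow_natCast (r ^ ((1:ℝ)/(2*(n:ℝ)))) n, ← Real.rpow_mul hr0.le]
      congr 1
      field_simp
    have hfarM : MeasurableSet far := hSm.diff measurableSet_closedBall
    have hrhalfδ : r ^ ((1:ℝ)/2) ≤ δ := by
      rw [hδ]
      exact Real.rpow_le_rpow_of_exponent_ge hr0 hr1 hexph
    have hrhalf0 : (0:ℝ) < r ^ ((1:ℝ)/2) := Real.rpow_pos_of_pos hr0 _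
    have hfar : ∫⁻ θ in far, ENNReal.ofReal (F θ) ∂μH[(n:ℝ)-1] ≤
        ENNReal.ofReal (2^(n+3)*V*δ/α) := by
      have hbd : ∀ θ ∈ far, F θ ≤ 2*r*2/(α * (δ/2)^n) := by
        rintro θ ⟨hθS', hθB⟩
        have hθn : ‖θ‖ = 1 := mem_sphere_zero_iff_norm.mp hθS'
        have hd : δ < dist θ ξ := not_le.mp (fun hc => hθB (mem_closedBall.mpr hc))
        have hst : δ ≤ ‖ξ - θ‖ := by rw [hnorm_dist θ]; exact hd.le
        refine psi_le n hρ0.le hρ1.le hξ (by positivity) ?_ ?_ hα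
        · apply pow_le_pow_left₀ (by positivity)
          have h2 := low2 hρ0.le hρ1.le hξ hθn
          nlinarith [norm_nonneg (ξ - θ), hδ0.le]
        · calc ‖ξ - θ‖ ≤ ‖ξ‖ + ‖θ‖ := norm_sub_le ξ θ
            _ = 2 := by rw [hξ, hθn]; norm_num
      calc ∫⁻ θ in far, ENNReal.ofReal (F θ) ∂μH[(n:ℝ)-1]
          ≤ ENNReal.ofReal (2*r*2/(α * (δ/2)^n)) * μH[(n:ℝ)-1] far :=
            setLint_le _ hfarM (by positivity) hbd
        _ ≤ ENNReal.ofReal (2*r*2/(α * (δ/2)^n)) * ENNReal.ofReal V := by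
            apply mul_le_mul' le_rfl
            refine le_trans (measure_mono diff_subset) ?_
            exact le_of_eq (ENNReal.ofReal_toReal (sphere_ne_top n hn)).symm
        _ = ENNReal.ofReal (2*r*2/(α * (δ/2)^n) * V) :=
            (ENNReal.ofReal_mul (by positivity)).symm
        _ ≤ ENNReal.ofReal (2^(n+3)*V*δ/α) := by
            apply ENNReal.ofReal_le_ofReal
            have h1 : (δ/2)^n = r ^ ((1:ℝ)/2) / 2^n := by rw [div_pow, hδn]
            have hsq : r ^ ((1:ℝ)/2) * r ^ ((1:ℝ)/2) = r := by
              rw [← Real.rpow_add hr0]; norm_num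
            have hdiv : r / r ^ ((1:ℝ)/2) = r ^ ((1:ℝ)/2) := by
              rw [show r / r ^ ((1:ℝ)/2) = r^(1:ℝ) / r ^ ((1:ℝ)/2) by rw [Real.rpow_one],
                ← Real.rpow_sub hr0]
              norm_num
            have heq : 2*r*2/(α * (δ/2)^n) * V = 2^(n+2) * V * (r / r ^ ((1:ℝ)/2)) / α := by
              rw [h1]
              field_simp
              ring
            rw [heq, hdiv]
            apply (div_le_div_iff_of_pos_right hα).mpr
            have h2 : 2^(n+2) * V * (r ^ ((1:ℝ)/2)) ≤ 2^(n+2) * V * δ :=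
              mul_le_mul_of_nonneg_left hrhalfδ (by positivity)
            have h5 : (2:ℝ)^(n+2) ≤ 2^(n+3) := pow_le_pow_right₀ (by norm_num) (by omega)
            have h6 : 2^(n+2) * V * δ ≤ 2^(n+3) * V * δ :=
              mul_le_mul_of_nonneg_right (mul_le_mul_of_nonneg_right h5 hV0) hδ0.le
            linarith
    -- annuli bounds
    have hAjM : ∀ j, MeasurableSet (Aj j) := fun j =>
      (hSm.inter measurableSet_closedBall).diff measurableSet_closedBall
    set gj : ℕ → ℝ≥0∞ := fun j =>
      if r*2^j < δ then ENNReal.ofReal (B*r*2^j) else 0 with hgj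
    have hAjle : ∀ j, ∫⁻ θ in Aj j, ENNReal.ofReal (F θ) ∂μH[(n:ℝ)-1] ≤ gj j := by
      intro j
      by_cases hjδ : r*2^j < δ
      · have hgjeq : gj j = ENNReal.ofReal (B*r*2^j) := if_pos hjδ
        rw [hgjeq]
        have hbd : ∀ θ ∈ Aj j, F θ ≤ 2*r*(r*2^(j+1))/(α * (r * (r*2^j/2)^(n-1))) := by
          rintro θ ⟨⟨hθS', hθB1⟩, hθB2⟩
          have hθn : ‖θ‖ = 1 := mem_sphere_zero_iff_norm.mp hθS'
          have hlow : r*2^j ≤ ‖ξ - θ‖ := by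
            rw [hnorm_dist θ]
            exact (not_le.mp (fun hc => hθB2 (mem_closedBall.mpr hc))).le
          have hup : ‖ξ - θ‖ ≤ r*2^(j+1) := by
            rw [hnorm_dist θ]
            exact le_trans (mem_closedBall.mp hθB1) (min_le_left _ _)
          refine psi_le n hρ0.le hρ1.le hξ (by positivity) ?_ hup hα
          have hx1 : r ≤ ‖ρ • ξ - θ‖ := by
            have h1 := low1 hρ0.le hρ1.le hξ hθn
            rw [← hr] at h1; exact h1
          have hx2 : r*2^j/2 ≤ ‖ρ • ξ - θ‖ := by
            have h2 := low2 hρ0.le hρ1.le hξ hθn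
            have hmm : (1/2)*(r*2^j) ≤ ρ*‖ξ - θ‖ :=
              mul_le_mul hhalf hlow (by positivity) hρ0.le
            linarith
          calc r * (r*2^j/2)^(n-1) ≤ ‖ρ • ξ - θ‖ * ‖ρ • ξ - θ‖^(n-1) :=
                mul_le_mul hx1 (pow_le_pow_left₀ (by positivity) hx2 _) (by positivity)
                  (norm_nonneg _)
            _ = ‖ρ • ξ - θ‖^n := by
                rw [← pow_succ', show n - 1 + 1 = n from by omega]
        have hminpos : 0 < min (r*2^(j+1)) δ := lt_min (by positivity) hδ0
        calc ∫⁻ θ in Aj j, ENNReal.ofReal (F θ) ∂μH[(n:ℝ)-1]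
            ≤ ENNReal.ofReal (2*r*(r*2^(j+1))/(α * (r * (r*2^j/2)^(n-1)))) *
                μH[(n:ℝ)-1] (Aj j) := setLint_le _ (hAjM j) (by positivity) hbd
          _ ≤ ENNReal.ofReal (2*r*(r*2^(j+1))/(α * (r * (r*2^j/2)^(n-1)))) *
                ENNReal.ofReal (A * (min (r*2^(j+1)) δ)^(n-1)) := by
              apply mul_le_mul' le_rfl
              exact le_trans (measure_mono diff_subset) (cap_le n hn ξ hξ hminpos)
          _ = ENNReal.ofReal (2*r*(r*2^(j+1))/(α * (r * (r*2^j/2)^(n-1))) *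
                (A * (min (r*2^(j+1)) δ)^(n-1))) := (ENNReal.ofReal_mul (by positivity)).symm
          _ ≤ ENNReal.ofReal (B*r*2^j) := by
              apply ENNReal.ofReal_le_ofReal
              have hmin1 : (min (r*2^(j+1)) δ)^(n-1) ≤ (r*2^(j+1))^(n-1) :=
                pow_le_pow_left₀ hminpos.le (min_le_left _ _) _
              have hstep : 2*r*(r*2^(j+1))/(α * (r * (r*2^j/2)^(n-1))) *
                  (A * (min (r*2^(j+1)) δ)^(n-1)) ≤
                  2*r*(r*2^(j+1))/(α * (r * (r*2^j/2)^(n-1))) * (A * (r*2^(j+1))^(n-1)) := by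
                apply mul_le_mul_of_nonneg_left _ (by positivity)
                exact mul_le_mul_of_nonneg_left hmin1 hA0
              refine le_trans hstep (le_of_eq ?_)
              have h2 : (r*2^(j+1))^(n-1) = 2^(n-1)*(r*2^j)^(n-1) := by
                rw [show r*2^(j+1) = 2*(r*2^j) by ring, mul_pow]
              have h3 : (r*2^j/2)^(n-1) = (r*2^j)^(n-1)/2^(n-1) := div_pow _ _ _
              have h4 : (4:ℝ)^n = ((2:ℝ)^(n-1))^2 * 4 := by
                have h42 : ((2:ℝ)^(n-1))^2 = 4^(n-1) := by
                  rw [← pow_mul, mul_comm (n-1) 2, pow_mul]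
                  norm_num
                rw [h42, ← pow_succ]
                congr 1
                omega
              rw [h2, h3, hB, h4]
              have hx0 : (r*(2:ℝ)^j) ≠ 0 := by positivity
              have hxp : ((r*(2:ℝ)^j)^(n-1)) ≠ 0 := pow_ne_zero _ hx0
              field_simp
              ring
      · have hgjeq : gj j = 0 := if_neg hjδ
        rw [hgjeq]
        have hempty : Aj j = ∅ := by
          apply eq_empty_iff_forall_notMem.mpr
          rintro θ ⟨⟨hθS', hθB1⟩, hθB2⟩
          exact hθB2 (mem_closedBall.mpr (le_trans (mem_closedBall.mp hθB1)
            (le_trans (min_le_right _ _) (not_lt.mp hjδ))))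
        rw [hempty]
        simp
    have htsum : ∑' j, ∫⁻ θ in Aj j, ENNReal.ofReal (F θ) ∂μH[(n:ℝ)-1] ≤
        ENNReal.ofReal (2*B*δ) := by
      refine le_trans (ENNReal.tsum_le_tsum hAjle) ?_
      have hex2 : ∃ k : ℕ, δ ≤ r*2^k := by
        obtain ⟨k, hk⟩ := pow_unbounded_of_one_lt (δ / r) (by norm_num : (1:ℝ) < 2)
        rw [div_lt_iff₀ hr0] at hk
        exact ⟨k, by nlinarith⟩
      have hzero : ∀ j ∉ Finset.range (Nat.find hex2), gj j = 0 := by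
        intro j hj
        rw [Finset.mem_range, not_lt] at hj
        refine if_neg (not_lt.mpr ?_)
        refine le_trans (Nat.find_spec hex2) ?_
        exact mul_le_mul_of_nonneg_left (pow_le_pow_right₀ (by norm_num) hj) hr0.le
      rw [tsum_eq_sum hzero]
      calc ∑ j ∈ Finset.range (Nat.find hex2), gj j
          ≤ ∑ j ∈ Finset.range (Nat.find hex2), ENNReal.ofReal (B*r*2^j) := by
            apply Finset.sum_le_sum
            intro j _
            rw [hgj]
            dsimp only
            split
            · exact le_rfl
            · exact zero_le
        _ = ENNReal.ofReal (∑ j ∈ Finset.range (Nat.find hex2), B*r*2^j) :=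
            (ENNReal.ofReal_sum_of_nonneg (fun j _ => by positivity)).symm
        _ ≤ ENNReal.ofReal (2*B*δ) := by
            apply ENNReal.ofReal_le_ofReal
            have hgs : ∑ j ∈ Finset.range (Nat.find hex2), B*r*(2:ℝ)^j
                = B*r*(2^(Nat.find hex2) - 1) := by
              rw [← Finset.mul_sum, geom_sum_eq (by norm_num : (2:ℝ) ≠ 1)]
              norm_num
            rw [hgs]
            rcases Nat.eq_zero_or_pos (Nat.find hex2) with hJ0 | hJpos
            · rw [hJ0]
              norm_num
              nlinarith [mul_nonneg hB0 hδ0.le]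
            · have hJ1 : ¬ (δ ≤ r*2^(Nat.find hex2 - 1)) :=
                Nat.find_min hex2 (by omega)
              push_neg at hJ1
              have h2J : (2:ℝ)^(Nat.find hex2) = 2*2^(Nat.find hex2 - 1) := by
                have h := pow_succ (2:ℝ) (Nat.find hex2 - 1)
                rw [show Nat.find hex2 - 1 + 1 = Nat.find hex2 from by omega] at h
                rw [h]; ring
              nlinarith [mul_nonneg hB0 hr0.le, mul_le_mul_of_nonneg_left hJ1.le hB0]
    -- combine
    calc ∫⁻ θ in S, ENNReal.ofReal (F θ) ∂μH[(n:ℝ)-1]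
        ≤ _ := hsplit
      _ ≤ ENNReal.ofReal (2*A*δ/α) +
          (ENNReal.ofReal (2^(n+3)*V*δ/α) + ENNReal.ofReal (2*B*δ)) :=
          add_le_add hcore (add_le_add hfar htsum)
      _ = ENNReal.ofReal (2*A*δ/α + (2^(n+3)*V*δ/α + 2*B*δ)) := by
          rw [← ENNReal.ofReal_add (by positivity) (by positivity),
            ← ENNReal.ofReal_add (div_nonneg (mul_nonneg (mul_nonneg (by norm_num : (0:ℝ) ≤ 2) hA0) hδ0.le) hα.le) (by positivity)]
      _ ≤ ENNReal.ofReal (C * δ) := by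
          apply ENNReal.ofReal_le_ofReal
          have e1 : 2*A*δ/α = (2*A/α)*δ := by ring
          have e2 : 2^(n+3)*V*δ/α = (2^(n+3)*V/α)*δ := by ring
          have e3 : C * δ = (2*A/α)*δ + ((2^(n+3)*V/α)*δ + 2*B*δ) + δ := by rw [hC]; ring
          rw [e1, e2, e3]
          linarith [hδ0.le]
end
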